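/- Let V be a complete Hausdorff commutative topological group. Let (C_λ)_{λ∈Λ} be a countable family of closed subsets of V, each containing 0, such that for every neighborhood T of 0 there exists a finite set Ξ ⊆ Λ with closure(∑_{λ∈Λ\Ξ} C_λ) ⊆ T, where for a family (B_λ) of subsets each containing 0, ∑_λ B_λ denotes the set of all sums ∑_λ b_λ with b_λ ∈ B_λ and b_λ = 0 for all but finitely many λ. Let (F_ω)_{ω∈Ω} be a countable family of closed subsets of V whose union contains a neighborhood U of 0 in V. Then there exist a finite set Ξ ⊆ Λ, an index ω ∈ Ω, and an element b ∈ ∑_{λ∈Ξ} C_λ such that b + closure(∑_{λ∈Λ\Ξ} C_λ) ⊆ F_ω; in particular closure(∑_{λ∈Λ\Ξ} C_λ) ⊆ F_ω − F_ω. -/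

import Mathlib

open Pointwise

def setSumOn {ι V : Type*} [AddCommMonoid V] (s : Set ι) (C : ι → Set V) : Set V :=
  { v : V | ∃ b : ι → V, (∀ i ∈ s, b i ∈ C i) ∧ (∀ i ∉ s, b i = 0) ∧
      (Function.support b).Finite ∧ v = ∑ᶠ i, b i }

section aux
variable {ι V : Type*} [AddCommMonoid V] {C : ι → Set V}

theorem zero_mem_setSumOn' (s : Set ι) (hC0 : ∀ i, (0 : V) ∈ C i) :
    (0 : V) ∈ setSumOn s C :=
  ⟨fun _ => 0, fun i _ => hC0 i, fun _ _ => rfl, by simp, by simp⟩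

theorem setSumOn_mono' (hC0 : ∀ i, (0 : V) ∈ C i) {s t : Set ι} (hst : s ⊆ t) :
    setSumOn s C ⊆ setSumOn t C := by
  rintro x ⟨b, hb1, hb2, hb3, rfl⟩
  refine ⟨b, fun i hi => ?_, fun i hi => hb2 i fun h => hi (hst h), hb3, rfl⟩
  by_cases h : i ∈ s
  · exact hb1 i h
  · rw [hb2 i h]; exact hC0 i

theorem add_mem_setSumOn' {s t : Set ι} (hst : Disjoint s t) {x y : V}
    (hx : x ∈ setSumOn s C) (hy : y ∈ setSumOn t C) : x + y ∈ setSumOn (s ∪ t) C := by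
  obtain ⟨b, hb1, hb2, hb3, rfl⟩ := hx
  obtain ⟨c, hc1, hc2, hc3, rfl⟩ := hy
  refine ⟨b + c, ?_, ?_, ?_, ?_⟩
  · rintro i (hi | hi)
    · have h0 : c i = 0 := hc2 i (Set.disjoint_left.mp hst hi)
      simpa [Pi.add_apply, h0] using hb1 i hi
    · have h0 : b i = 0 := hb2 i (Set.disjoint_right.mp hst hi)
      simpa [Pi.add_apply, h0] using hc1 i hi
  · intro i hi
    simp [Pi.add_apply, hb2 i fun h => hi (Or.inl h), hc2 i fun h => hi (Or.inr h)]
  · exact (hb3.union hc3).subset (Function.support_add b c)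
  · simpa using (finsum_add_distrib hb3 hc3).symm

theorem finset_sum_mem_sum' (Ξ : Finset ι) (f : ι → V) (h : ∀ i ∈ Ξ, f i ∈ C i) :
    ∑ i ∈ Ξ, f i ∈ ∑ i ∈ Ξ, C i := by
  classical
  induction Ξ using Finset.induction_on with
  | empty => simp
  | insert _ _ hnot ih =>
      rename_i a s
      rw [Finset.sum_insert hnot, Finset.sum_insert hnot]
      exact Set.add_mem_add (h _ (Finset.mem_insert_self _ _))
        (ih fun i hi => h i (Finset.mem_insert_of_mem hi))

theorem setSumOn_subset_finsetSum (hC0 : ∀ i, (0 : V) ∈ C i) (Ξ : Finset ι) :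
    setSumOn (↑Ξ : Set ι) C ⊆ ∑ i ∈ Ξ, C i := by
  rintro x ⟨b, hb1, hb2, hb3, rfl⟩
  have hsupp : Function.support b ⊆ ↑Ξ := fun i hi => by
    by_contra h; exact hi (hb2 i h)
  rw [finsum_eq_sum_of_support_subset b hsupp]
  exact finset_sum_mem_sum' Ξ b hb1

end aux


theorem statement15 {V : Type*}
    [AddCommGroup V] [UniformSpace V] [IsUniformAddGroup V] [CompleteSpace V] [T2Space V]
    (ι κ : Type*) [Countable ι] [Countable κ]
    (C : ι → Set V) (hCcl : ∀ i, IsClosed (C i)) (hC0 : ∀ i, (0 : V) ∈ C i)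
    (hsmall : ∀ T ∈ nhds (0 : V), ∃ Ξ : Finset ι,
      closure (setSumOn ((↑Ξ : Set ι))ᶜ C) ⊆ T)
    (F : κ → Set V) (hFcl : ∀ ω, IsClosed (F ω))
    (U : Set V) (hU : U ∈ nhds (0 : V)) (hUF : U ⊆ ⋃ ω, F ω) :
    ∃ (Ξ : Finset ι) (ω : κ) (b : V), b ∈ ∑ i ∈ Ξ, C i ∧
      (∀ v ∈ closure (setSumOn ((↑Ξ : Set ι))ᶜ C), b + v ∈ F ω) ∧
      closure (setSumOn ((↑Ξ : Set ι))ᶜ C) ⊆ F ω - F ω := by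
  classical
  set K : Finset ι → Set V := fun Ξ => closure (setSumOn ((↑Ξ : Set ι))ᶜ C) with hKdef
  have Kanti : ∀ {Ξ Ξ' : Finset ι}, Ξ ⊆ Ξ' → K Ξ' ⊆ K Ξ := by
    intro Ξ Ξ' h
    exact closure_mono (setSumOn_mono' hC0 (Set.compl_subset_compl.mpr (by exact_mod_cast h)))
  -- reduce to the main part
  suffices hmain : ∃ (Ξ : Finset ι) (ω : κ) (b : V), b ∈ ∑ i ∈ Ξ, C i ∧
      (∀ v ∈ K Ξ, b + v ∈ F ω) by
    obtain ⟨Ξ, ω, b, hb, hbv⟩ := hmain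
    refine ⟨Ξ, ω, b, hb, hbv, fun v hv => ?_⟩
    have h0 : (0 : V) ∈ K Ξ := subset_closure (zero_mem_setSumOn' _ hC0)
    exact ⟨b + v, hbv v hv, b + 0, hbv 0 h0, by rw [add_zero]; exact add_sub_cancel_left b v⟩
  by_contra hcon
  push_neg at hcon
  -- enumerations
  obtain ⟨fι, hfι⟩ := Countable.exists_injective_nat ι
  have hgfin : ∀ n : ℕ, (fι ⁻¹' (Set.Iic n)).Finite :=
    fun n => Set.Finite.preimage (Set.injOn_of_injective hfι) (Set.finite_Iic n)
  set g : ℕ → Finset ι := fun n => (hgfin n).toFinset with hgdef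
  have hgabs : ∀ Ξ : Finset ι, ∃ N, Ξ ⊆ g N := by
    intro Ξ
    refine ⟨Ξ.sup fι, fun i hi => ?_⟩
    simp only [hgdef, Set.Finite.mem_toFinset, Set.mem_preimage, Set.mem_Iic]
    exact Finset.le_sup hi
  have h0U : (0 : V) ∈ U := mem_of_mem_nhds hU
  obtain ⟨ω0, hω0⟩ := Set.mem_iUnion.mp (hUF h0U)
  haveI : Nonempty κ := ⟨ω0⟩
  obtain ⟨fκ, hfκ⟩ := exists_surjective_nat κ
  -- key step
  have key : ∀ (n : ℕ) (Ξ : Finset ι) (s : V), ∃ (Ξ' : Finset ι) (w : V),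
      s ∈ setSumOn (↑Ξ : Set ι) C →
      (Ξ ⊆ Ξ' ∧ g (n + 1) ⊆ Ξ' ∧ w ∈ setSumOn ((↑Ξ' : Set ι) \ (↑Ξ : Set ι)) C ∧
        ∀ v ∈ K Ξ', s + w + v ∉ F (fκ n)) := by
    intro n Ξ s
    by_cases hs : s ∈ setSumOn (↑Ξ : Set ι) C
    swap
    · exact ⟨Ξ, 0, fun h => absurd h hs⟩
    obtain ⟨v, hvK, hvF⟩ := hcon Ξ (fκ n) s (setSumOn_subset_finsetSum hC0 Ξ hs)
    have hO : IsOpen {x : V | s + x ∉ F (fκ n)} :=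
      (hFcl (fκ n)).isOpen_compl.preimage (continuous_const.add continuous_id)
    have h1 : {x : V | s + x ∉ F (fκ n)} ∈ nhds v := hO.mem_nhds hvF
    have h2 : (fun w : V => v + w) ⁻¹' {x | s + x ∉ F (fκ n)} ∈ nhds (0 : V) := by
      have hc : ContinuousAt (fun w : V => v + w) 0 :=
        (continuous_const.add continuous_id).continuousAt
      exact hc.preimage_mem_nhds (by simpa using h1)
    obtain ⟨W, hW, hWW⟩ := exists_nhds_zero_half h2
    -- pick v' in the tail close to v
    have hWv : (fun w : V => v + w) '' W ∈ nhds v := by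
      have := (Homeomorph.addLeft v).map_nhds_eq (0 : V)
      rw [show (Homeomorph.addLeft v) 0 = v by simp] at this
      rw [← this]
      exact Filter.image_mem_map hW
    obtain ⟨v', hv'W, hv'tail⟩ := mem_closure_iff_nhds.mp hvK _ hWv
    obtain ⟨w0, hw0W, hw0⟩ := hv'W
    obtain ⟨Ξw, hΞw⟩ := hsmall W hW
    obtain ⟨b, hb1, hb2, hb3, hbsum⟩ := hv'tail
    refine ⟨Ξ ∪ hb3.toFinset ∪ Ξw ∪ g (n + 1), v', fun _ => ?_⟩
    refine ⟨by intro i hi; simp [Finset.mem_union, hi], by intro i hi; simp [Finset.mem_union, hi],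
      ?_, ?_⟩
    · refine ⟨b, fun i hi => ?_, fun i hi => ?_, hb3, hbsum⟩
      · exact hb1 i hi.2
      · by_contra hbi
        have hiS : i ∈ Function.support b := hbi
        by_cases hiΞ : i ∈ (↑Ξ : Set ι)
        · exact hbi (hb2 i (by simpa using hiΞ))
        · refine hi ⟨?_, hiΞ⟩
          simp only [Finset.coe_union, Set.mem_union]
          exact Or.inl (Or.inl (Or.inr (by simpa using hiS)))
    · intro u hu
      have huW : u ∈ W := by
        refine hΞw (Kanti ?_ hu)
        intro i hi
        simp [Finset.mem_union, hi]
      have : v + (w0 + u) ∈ {x : V | s + x ∉ F (fκ n)} := hWW w0 hw0W u huW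
      have heq : s + v' + u = s + (v + (w0 + u)) := by rw [← hw0]; beta_reduce; abel
      rw [heq]
      exact this
  choose nxtΞ nxtw hkey using key
  -- the recursively defined sequence
  obtain ⟨Ξu, hΞu⟩ := hsmall U hU
  set step : ℕ → Finset ι × V → Finset ι × V :=
    fun n p => (nxtΞ n p.1 p.2, p.2 + nxtw n p.1 p.2) with hstepdef
  set seq : ℕ → Finset ι × V :=
    fun n => Nat.rec (Ξu ∪ g 0, (0 : V)) step n with hseqdef
  set Ξs : ℕ → Finset ι := fun n => (seq n).1 with hΞsdef
  set ss : ℕ → V := fun n => (seq n).2 with hssdef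
  have hΞsS : ∀ n, Ξs (n + 1) = nxtΞ n (Ξs n) (ss n) := fun n => rfl
  have hssS : ∀ n, ss (n + 1) = ss n + nxtw n (Ξs n) (ss n) := fun n => rfl
  have I1 : ∀ n, ss n ∈ setSumOn (↑(Ξs n) : Set ι) C := by
    intro n
    induction n with
    | zero => exact zero_mem_setSumOn' _ hC0
    | succ n ih =>
        obtain ⟨hsub, hgsub, hwmem, havoid⟩ := hkey n (Ξs n) (ss n) ih
        rw [hΞsS n, hssS n]
        have hdisj : Disjoint (↑(Ξs n) : Set ι)
            ((↑(nxtΞ n (Ξs n) (ss n)) : Set ι) \ (↑(Ξs n) : Set ι)) :=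
          Set.disjoint_left.mpr fun i hi h2 => h2.2 hi
        have hmem := add_mem_setSumOn' hdisj ih hwmem
        refine setSumOn_mono' hC0 ?_ hmem
        rintro i (hi | hi)
        · exact_mod_cast hsub hi
        · exact hi.1
  have I2 : ∀ n, Ξs n ⊆ Ξs (n + 1) := by
    intro n
    rw [hΞsS n]
    exact (hkey n (Ξs n) (ss n) (I1 n)).1
  have hmono : ∀ {n m : ℕ}, n ≤ m → Ξs n ⊆ Ξs m := by
    intro n m h
    exact monotone_nat_of_le_succ (f := Ξs) I2 h
  have I3 : ∀ n, g n ⊆ Ξs n := by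
    intro n
    cases n with
    | zero => exact fun i hi => Finset.mem_union_right _ hi
    | succ n =>
        rw [hΞsS n]
        exact (hkey n (Ξs n) (ss n) (I1 n)).2.1
  have I4 : ∀ n, ss (n + 1) - ss n ∈
      setSumOn ((↑(Ξs (n + 1)) : Set ι) \ (↑(Ξs n) : Set ι)) C := by
    intro n
    have := (hkey n (Ξs n) (ss n) (I1 n)).2.2.1
    rw [hΞsS n, hssS n]
    simpa using this
  have I5 : ∀ n, ∀ v ∈ K (Ξs (n + 1)), ss (n + 1) + v ∉ F (fκ n) := by
    intro n
    have := (hkey n (Ξs n) (ss n) (I1 n)).2.2.2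
    rw [hΞsS n, hssS n]
    exact this
  -- differences
  have D : ∀ n m, n ≤ m → ss m - ss n ∈
      setSumOn ((↑(Ξs m) : Set ι) \ (↑(Ξs n) : Set ι)) C := by
    intro n m hnm
    induction m, hnm using Nat.le_induction with
    | base => simpa using zero_mem_setSumOn' _ hC0
    | succ m hnm ih =>
        have hdisj : Disjoint ((↑(Ξs m) : Set ι) \ (↑(Ξs n) : Set ι))
            ((↑(Ξs (m + 1)) : Set ι) \ (↑(Ξs m) : Set ι)) :=
          Set.disjoint_left.mpr fun i hi h2 => h2.2 hi.1
        have hmem := add_mem_setSumOn' hdisj ih (I4 m)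
        have heq : ss m - ss n + (ss (m + 1) - ss m) = ss (m + 1) - ss n := by abel
        rw [heq] at hmem
        refine setSumOn_mono' hC0 ?_ hmem
        rintro i (hi | hi)
        · exact ⟨(Finset.coe_subset.mpr (I2 m)) hi.1, hi.2⟩
        · exact ⟨hi.1, fun h => hi.2 ((Finset.coe_subset.mpr (hmono hnm)) h)⟩
  have DK : ∀ n m, n ≤ m → ss m - ss n ∈ K (Ξs n) := by
    intro n m hnm
    exact subset_closure (setSumOn_mono' hC0 (fun i hi => hi.2) (D n m hnm))
  -- Cauchyness
  have hcauchy : CauchySeq ss := by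
    rw [cauchySeq_iff]
    intro E hE
    rw [uniformity_eq_comap_nhds_zero V] at hE
    obtain ⟨T, hT, hTE⟩ := hE
    obtain ⟨T', hT', hT'T⟩ := exists_nhds_half_neg hT
    obtain ⟨Ξt, hΞt⟩ := hsmall T' hT'
    obtain ⟨N, hN⟩ := hgabs Ξt
    refine ⟨N, fun k hk l hl => ?_⟩
    have hsub : Ξt ⊆ Ξs N := hN.trans (I3 N)
    have h1 : ss l - ss N ∈ T' := hΞt (Kanti hsub (DK N l hl))
    have h2 : ss k - ss N ∈ T' := hΞt (Kanti hsub (DK N k hk))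
    apply hTE
    have : ss l - ss k ∈ T := by
      have := hT'T _ h1 _ h2
      simpa [sub_sub_sub_cancel_right] using this
    simpa using this
  obtain ⟨x, hx⟩ := cauchySeq_tendsto_of_complete hcauchy
  -- limit lies in each translate
  have hxA : ∀ n, x - ss n ∈ K (Ξs n) := by
    intro n
    have hcl : IsClosed {y : V | y - ss n ∈ K (Ξs n)} :=
      IsClosed.preimage (continuous_id.sub continuous_const) isClosed_closure
    refine hcl.mem_of_tendsto hx ?_
    exact Filter.eventually_atTop.mpr ⟨n, fun m hm => DK n m hm⟩
  have hxnotF : ∀ ω, x ∉ F ω := by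
    intro ω
    obtain ⟨n, rfl⟩ := hfκ ω
    have := I5 n (x - ss (n + 1)) (hxA (n + 1))
    simpa using this
  have hxU : x ∈ U := by
    have h0 : x - ss 0 ∈ K (Ξs 0) := hxA 0
    have hss0 : ss 0 = 0 := rfl
    have hsub : K (Ξs 0) ⊆ K Ξu := Kanti (fun i hi => Finset.mem_union_left _ hi)
    have := hΞu (hsub h0)
    rwa [hss0, sub_zero] at this
  obtain ⟨ω, hω⟩ := Set.mem_iUnion.mp (hUF hxU)
  exact hxnotF ω hω
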